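/- If a measurement scheme Q = {P_1,…,P_l} with outcome set {1,…,m} determines any pure state among all states, then there exists ε > 0 such that every measurement scheme Q′ = {P′_1,…,P′_l} with the same outcome set satisfying ‖M_Q − M_{Q′}‖_∞ < ε also determines any pure state among all states. -/

import Mathlib

open Matrix ComplexOrder

noncomputable def frobNorm {n m : Type*} [Fintype n] [Fintype m] {𝕜 : Type*} [RCLike 𝕜]
    (X : Matrix n m 𝕜) : ℝ :=
  Real.sqrt (∑ i, ∑ j, ‖X i j‖ ^ 2)

def IsPOVM {d m : ℕ} (P : Fin m → Matrix (Fin d) (Fin d) ℂ) : Prop :=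
  (∀ j, (P j).PosSemidef) ∧ (∑ j, P j) = 1

def IsMeasScheme {d l m : ℕ} (Q : Fin l → Fin m → Matrix (Fin d) (Fin d) ℂ) : Prop :=
  ∀ i, IsPOVM (Q i)

noncomputable def measMap {d l m : ℕ} (Q : Fin l → Fin m → Matrix (Fin d) (Fin d) ℂ)
    (X : Matrix (Fin d) (Fin d) ℂ) : Matrix (Fin l) (Fin m) ℝ :=
  Matrix.of fun i j => (Matrix.trace (X * Q i j)).re

noncomputable def pureState {d : ℕ} (ψ : Fin d → ℂ) : Matrix (Fin d) (Fin d) ℂ :=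
  Matrix.vecMulVec ψ (star ψ)

def IsState {d : ℕ} (ρ : Matrix (Fin d) (Fin d) ℂ) : Prop :=
  ρ.PosSemidef ∧ ρ.trace = 1

def DeterminesPure {d l m : ℕ} (Q : Fin l → Fin m → Matrix (Fin d) (Fin d) ℂ) : Prop :=
  ∀ ψ : Fin d → ℂ, (∑ k, Complex.normSq (ψ k)) = 1 →
    ∀ ρ : Matrix (Fin d) (Fin d) ℂ, IsState ρ →
      measMap Q (pureState ψ) = measMap Q ρ → ρ = pureState ψ

noncomputable def posEigCount {d : ℕ} {X : Matrix (Fin d) (Fin d) ℂ} (hX : X.IsHermitian) : ℕ :=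
  Nat.card {i : Fin d // 0 < hX.eigenvalues i}

def Kset (d : ℕ) : Set (Matrix (Fin d) (Fin d) ℂ) :=
  {X | ∃ hX : X.IsHermitian, posEigCount hX ≤ 1 ∧ frobNorm X = 1}

noncomputable def opNormHerm {d l m : ℕ}
    (T : Matrix (Fin d) (Fin d) ℂ → Matrix (Fin l) (Fin m) ℝ) : ℝ :=
  sSup {r : ℝ | ∃ X : Matrix (Fin d) (Fin d) ℂ, X.IsHermitian ∧ frobNorm X = 1 ∧ r = frobNorm (T X)}

section A
variable {n m' : Type*} [Fintype n] [Fintype m'] {𝕜 : Type*} [RCLike 𝕜]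

lemma frobNorm_nonneg (X : Matrix n m' 𝕜) : 0 ≤ frobNorm X := Real.sqrt_nonneg _

lemma frobNorm_sq (X : Matrix n m' 𝕜) : frobNorm X ^ 2 = ∑ i, ∑ j, ‖X i j‖ ^ 2 := by
  rw [frobNorm, Real.sq_sqrt]
  positivity

lemma frobNorm_eq_zero_iff {X : Matrix n m' 𝕜} : frobNorm X = 0 ↔ X = 0 := by
  rw [frobNorm, Real.sqrt_eq_zero (by positivity)]
  constructor
  · intro h
    ext i j
    have h1 : ∀ i ∈ Finset.univ, (0:ℝ) ≤ ∑ j, ‖X i j‖ ^ 2 := fun _ _ => by positivity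
    have h2 := (Finset.sum_eq_zero_iff_of_nonneg h1).1 h i (Finset.mem_univ i)
    have h3 : ∀ j ∈ Finset.univ, (0:ℝ) ≤ ‖X i j‖ ^ 2 := fun _ _ => by positivity
    have h4 := (Finset.sum_eq_zero_iff_of_nonneg h3).1 h2 j (Finset.mem_univ j)
    simpa using h4
  · intro h; subst h; simp

lemma frobNorm_smul (c : 𝕜) (X : Matrix n m' 𝕜) : frobNorm (c • X) = ‖c‖ * frobNorm X := by
  rw [frobNorm, frobNorm]
  have : ∀ i j, ‖(c • X) i j‖ ^ 2 = ‖c‖^2 * ‖X i j‖ ^2 := by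
    intro i j
    simp [norm_smul, mul_pow]
  simp only [this, ← Finset.mul_sum]
  rw [Real.sqrt_mul (by positivity), Real.sqrt_sq (norm_nonneg _)]

lemma entry_le_frobNorm (X : Matrix n m' 𝕜) (i : n) (j : m') : ‖X i j‖ ≤ frobNorm X := by
  rw [frobNorm, ← Real.sqrt_sq (norm_nonneg (X i j))]
  apply Real.sqrt_le_sqrt
  calc ‖X i j‖^2 ≤ ∑ j', ‖X i j'‖^2 :=
        Finset.single_le_sum (f := fun j' => ‖X i j'‖^2) (fun _ _ => by positivity) (Finset.mem_univ j)
    _ ≤ ∑ i', ∑ j', ‖X i' j'‖^2 :=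
        Finset.single_le_sum (f := fun i' => ∑ j', ‖X i' j'‖^2) (fun _ _ => by positivity) (Finset.mem_univ i)

end A

section B
variable {d l m : ℕ}

lemma measMap_sub (Q : Fin l → Fin m → Matrix (Fin d) (Fin d) ℂ) (X Y : Matrix (Fin d) (Fin d) ℂ) :
    measMap Q (X - Y) = measMap Q X - measMap Q Y := by
  ext i j
  simp [measMap, Matrix.sub_mul, Complex.sub_re]

lemma measMap_smul (Q : Fin l → Fin m → Matrix (Fin d) (Fin d) ℂ) (c : ℝ) (X : Matrix (Fin d) (Fin d) ℂ) :
    measMap Q ((c:ℂ) • X) = c • measMap Q X := by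
  ext i j
  simp [measMap, Matrix.smul_mul, Complex.re_ofReal_mul]

lemma pureState_isHermitian (ψ : Fin d → ℂ) : (pureState ψ).IsHermitian := by
  ext i j
  simp [pureState, Matrix.conjTranspose_apply, Matrix.vecMulVec_apply, mul_comm]

lemma pureState_trace (ψ : Fin d → ℂ) :
    (pureState ψ).trace = ((∑ k, Complex.normSq (ψ k) : ℝ) : ℂ) := by
  push_cast
  rw [Matrix.trace]
  congr 1
  ext k
  simp [pureState, Matrix.vecMulVec_apply, Matrix.diag, Complex.mul_conj]

lemma pureState_mulVec (φ v : Fin d → ℂ) :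
    pureState φ *ᵥ v = (star φ ⬝ᵥ v) • φ := by
  ext k
  simp [pureState, Matrix.mulVec, Matrix.vecMulVec_apply, dotProduct, Finset.mul_sum,
    mul_comm, mul_assoc, mul_left_comm]

end B

section C
variable {d : ℕ} {X : Matrix (Fin d) (Fin d) ℂ}

-- quadratic form computation
lemma quad_UDU (U : Matrix (Fin d) (Fin d) ℂ) (hU : star U * U = 1) (g : Fin d → ℂ)
    (v : Fin d → ℂ) :
    star (U *ᵥ v) ⬝ᵥ ((U * Matrix.diagonal g * star U) *ᵥ (U *ᵥ v)) =
      ∑ i, g i * (Complex.normSq (v i) : ℂ) := by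
  have hU' : Uᴴ * U = 1 := hU
  have h1 : (U * Matrix.diagonal g * star U) *ᵥ (U *ᵥ v) = U *ᵥ (Matrix.diagonal g *ᵥ v) := by
    rw [Matrix.mulVec_mulVec, mul_assoc, mul_assoc, hU, mul_one, Matrix.mulVec_mulVec]
  rw [h1, Matrix.star_mulVec, ← Matrix.dotProduct_mulVec, Matrix.mulVec_mulVec, hU',
    Matrix.one_mulVec]
  simp only [dotProduct, Matrix.mulVec_diagonal, Pi.star_apply]
  congr 1
  ext i
  rw [show star (v i) * (g i * v i) = g i * (star (v i) * v i) by ring]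
  congr 1
  rw [Complex.star_def, mul_comm, Complex.mul_conj]

lemma quad_pure (φ w : Fin d → ℂ) :
    star w ⬝ᵥ (pureState φ *ᵥ w) = (star φ ⬝ᵥ w) * (star w ⬝ᵥ φ) := by
  rw [pureState_mulVec, dotProduct_smul, smul_eq_mul]

end C

section D
variable {d : ℕ}

lemma trace_UDU (U : Matrix (Fin d) (Fin d) ℂ) (hU : star U * U = 1) (g : Fin d → ℂ) :
    (U * Matrix.diagonal g * star U).trace = ∑ i, g i := by
  rw [Matrix.trace_mul_cycle, hU, one_mul, Matrix.trace_diagonal]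

lemma col_unit (U : Matrix (Fin d) (Fin d) ℂ) (hU : star U * U = 1) (i : Fin d) :
    ∑ k, Complex.normSq (U k i) = 1 := by
  have h := congrFun (congrFun hU i) i
  rw [Matrix.mul_apply, Matrix.one_apply_eq] at h
  have h2 : ∀ k, star U i k * U k i = ((Complex.normSq (U k i) : ℝ) : ℂ) := fun k => by
    rw [Matrix.star_apply, Complex.star_def, mul_comm, Complex.mul_conj]
  rw [Finset.sum_congr rfl (fun k _ => h2 k)] at h
  exact_mod_cast h

lemma pure_col (U : Matrix (Fin d) (Fin d) ℂ) (i₀ : Fin d) :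
    pureState (fun k => U k i₀) =
      U * Matrix.diagonal (fun i => if i = i₀ then (1:ℂ) else 0) * star U := by
  ext a b
  simp [Matrix.mul_apply, Matrix.diagonal_apply, Matrix.star_apply, pureState,
    Matrix.vecMulVec_apply, Pi.star_apply, ite_mul, zero_mul, mul_ite, mul_zero,
    Finset.sum_ite_eq', Complex.star_def]

lemma psd_UDU (U : Matrix (Fin d) (Fin d) ℂ) (g : Fin d → ℝ) (hg : ∀ i, 0 ≤ g i) :
    (U * Matrix.diagonal (fun i => (g i : ℂ)) * star U).PosSemidef := by
  have h : (Matrix.diagonal (fun i => (g i : ℂ))).PosSemidef := by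
    refine Matrix.PosSemidef.diagonal (Pi.le_def.mpr fun i => ?_)
    simpa using Complex.zero_le_real.mpr (hg i)
  simpa [Matrix.star_eq_conjTranspose] using h.mul_mul_conjTranspose_same U

lemma spectral {X : Matrix (Fin d) (Fin d) ℂ} (hX : X.IsHermitian) :
    X = (hX.eigenvectorUnitary : Matrix (Fin d) (Fin d) ℂ) *
        Matrix.diagonal (fun i => (hX.eigenvalues i : ℂ)) *
        star (hX.eigenvectorUnitary : Matrix (Fin d) (Fin d) ℂ) := by
  exact hX.spectral_theorem

end D

section E
variable {d : ℕ}

lemma onePos {X : Matrix (Fin d) (Fin d) ℂ} (hX : X.IsHermitian) (s : ℝ) (φ : Fin d → ℂ)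
    (hpsd : ((s:ℂ) • pureState φ - X).PosSemidef) :
    ∀ i j, 0 < hX.eigenvalues i → 0 < hX.eigenvalues j → i = j := by
  intro i j hi hj
  by_contra hij
  set U : Matrix (Fin d) (Fin d) ℂ := (hX.eigenvectorUnitary : Matrix (Fin d) (Fin d) ℂ) with hUdef
  have hU : star U * U = 1 := Matrix.mem_unitaryGroup_iff'.mp hX.eigenvectorUnitary.2
  set b : Fin d → ℂ := star φ ᵥ* U with hbdef
  set lam := hX.eigenvalues with hlam
  obtain ⟨p, q, hsum0, hpos⟩ :
      ∃ p q : ℂ, b i * p + b j * q = 0 ∧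
        0 < lam i * Complex.normSq p + lam j * Complex.normSq q := by
    by_cases hb : b i = 0 ∧ b j = 0
    · exact ⟨1, 0, by simp [hb.1, hb.2], by simpa using hi⟩
    · refine ⟨b j, -(b i), by ring, ?_⟩
      rcases (not_and_or.mp hb) with h | h
      · have h1 : 0 < Complex.normSq (b i) := by
          simpa [Complex.normSq_pos] using h
        have h2 : 0 ≤ lam i * Complex.normSq (b j) :=
          mul_nonneg hi.le (Complex.normSq_nonneg _)
        have h3 : 0 < lam j * Complex.normSq (-(b i)) := by
          rw [Complex.normSq_neg]; exact mul_pos hj h1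
        linarith
      · have h1 : 0 < Complex.normSq (b j) := by
          simpa [Complex.normSq_pos] using h
        have h2 : 0 < lam i * Complex.normSq (b j) := mul_pos hi h1
        have h3 : 0 ≤ lam j * Complex.normSq (-(b i)) :=
          mul_nonneg hj.le (Complex.normSq_nonneg _)
        linarith
  -- test vector
  set v : Fin d → ℂ := fun k => if k = i then p else if k = j then q else 0 with hvdef
  set w : Fin d → ℂ := U *ᵥ v with hwdef
  have key := hpsd.dotProduct_mulVec_nonneg w
  -- compute the pure part
  have hphiw : star φ ⬝ᵥ w = 0 := by
    rw [hwdef, Matrix.dotProduct_mulVec]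
    have : b ⬝ᵥ v = b i * p + b j * q := by
      rw [dotProduct]
      rw [Finset.sum_eq_add_of_mem i j (Finset.mem_univ i) (Finset.mem_univ j) hij ?_]
      · simp [hvdef, hij, Ne.symm hij]
      · intro k _ hk
        simp [hvdef, hk.1, hk.2]
    rw [← hbdef] at *
    rw [this, hsum0]
  have hXw : star w ⬝ᵥ (X *ᵥ w) =
      ((lam i * Complex.normSq p + lam j * Complex.normSq q : ℝ) : ℂ) := by
    conv_lhs => rw [spectral hX]
    rw [← hUdef, hwdef, quad_UDU U hU]
    rw [show ∑ k, (lam k : ℂ) * (Complex.normSq (v k) : ℂ) =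
        (lam i : ℂ) * Complex.normSq p + (lam j : ℂ) * Complex.normSq q from ?_]
    · push_cast; ring
    · rw [Finset.sum_eq_add_of_mem i j (Finset.mem_univ i) (Finset.mem_univ j) hij ?_]
      · simp [hvdef, hij, Ne.symm hij]
      · intro k _ hk
        simp [hvdef, hk.1, hk.2]
  rw [Matrix.sub_mulVec, dotProduct_sub, Matrix.smul_mulVec,
    dotProduct_smul, quad_pure, hphiw, hXw] at key
  simp only [zero_mul, smul_zero, zero_sub] at key
  rw [Complex.le_def] at key
  simp only [Complex.zero_re, Complex.neg_re, Complex.ofReal_re] at key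
  linarith [key.1]

end E

section F
variable {d : ℕ}

lemma eigen_sum_trace {X : Matrix (Fin d) (Fin d) ℂ} (hX : X.IsHermitian) :
    X.trace = ((∑ i, hX.eigenvalues i : ℝ) : ℂ) := by
  have hU : star (hX.eigenvectorUnitary : Matrix (Fin d) (Fin d) ℂ) *
      (hX.eigenvectorUnitary : Matrix (Fin d) (Fin d) ℂ) = 1 :=
    Matrix.mem_unitaryGroup_iff'.mp hX.eigenvectorUnitary.2
  conv_lhs => rw [spectral hX]
  rw [trace_UDU _ hU]
  push_cast
  rfl

lemma frob_sq_eigen {X : Matrix (Fin d) (Fin d) ℂ} (hX : X.IsHermitian) :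
    frobNorm X ^ 2 = ∑ i, hX.eigenvalues i ^ 2 := by
  set U : Matrix (Fin d) (Fin d) ℂ := (hX.eigenvectorUnitary : Matrix (Fin d) (Fin d) ℂ) with hUdef
  have hU : star U * U = 1 := Matrix.mem_unitaryGroup_iff'.mp hX.eigenvectorUnitary.2
  have h1 : Matrix.trace (Xᴴ * X) = ((∑ i, ∑ j, ‖X i j‖ ^ 2 : ℝ) : ℂ) := by
    rw [Matrix.trace]
    push_cast
    rw [Finset.sum_comm]
    congr 1; ext j
    rw [Matrix.diag, Matrix.mul_apply]
    congr 1; ext i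
    rw [Matrix.conjTranspose_apply, Complex.star_def, mul_comm, Complex.mul_conj']
  have h2 : X * X = U * Matrix.diagonal (fun i => ((hX.eigenvalues i : ℂ)) *
      (hX.eigenvalues i : ℂ)) * star U := by
    conv_lhs => rw [spectral hX, ← hUdef]
    rw [← Matrix.diagonal_mul_diagonal]
    have hmid : star U * (U * (Matrix.diagonal (fun i => (hX.eigenvalues i : ℂ)) * star U)) =
        Matrix.diagonal (fun i => (hX.eigenvalues i : ℂ)) * star U := by
      rw [← mul_assoc, hU, one_mul]
    simp only [mul_assoc, hmid]
  have h3 : Matrix.trace (Xᴴ * X) = ((∑ i, hX.eigenvalues i ^ 2 : ℝ) : ℂ) := by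
    rw [hX.eq, h2, trace_UDU _ hU]
    push_cast
    congr 1; ext i; ring
  rw [h1] at h3
  have h4 : (∑ i, ∑ j, ‖X i j‖ ^ 2 : ℝ) = ∑ i, hX.eigenvalues i ^ 2 := by exact_mod_cast h3
  rw [frobNorm_sq, h4]

end F

section G
variable {d : ℕ}

lemma smul_diag_conj (U : Matrix (Fin d) (Fin d) ℂ) (t : ℂ) (e : Fin d → ℂ) :
    t • (U * Matrix.diagonal e * star U) = U * Matrix.diagonal (fun i => t * e i) * star U := by
  have he : (fun i => t * e i) = t • e := by ext i; simp
  rw [he, Matrix.diagonal_smul, mul_smul_comm, smul_mul_assoc]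

lemma conj_sub (U : Matrix (Fin d) (Fin d) ℂ) (e f : Fin d → ℂ) :
    U * Matrix.diagonal e * star U - U * Matrix.diagonal f * star U =
      U * Matrix.diagonal (fun i => e i - f i) * star U := by
  rw [← Matrix.sub_mul, ← Matrix.mul_sub, ← Matrix.diagonal_sub]

lemma decomp {X : Matrix (Fin d) (Fin d) ℂ} (hX : X.IsHermitian) (htr : X.trace = 0)
    (hne : X ≠ 0)
    (hone : ∀ i j, 0 < hX.eigenvalues i → 0 < hX.eigenvalues j → i = j) :
    ∃ s : ℝ, 0 < s ∧ ∃ ψ : Fin d → ℂ, (∑ k, Complex.normSq (ψ k)) = 1 ∧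
      ∃ ρ, IsState ρ ∧ X = (s:ℂ) • (pureState ψ - ρ) := by
  set U : Matrix (Fin d) (Fin d) ℂ := (hX.eigenvectorUnitary : Matrix (Fin d) (Fin d) ℂ) with hUdef
  have hU : star U * U = 1 := Matrix.mem_unitaryGroup_iff'.mp hX.eigenvectorUnitary.2
  set lam := hX.eigenvalues with hlamdef
  have hsum : ∑ i, lam i = 0 := by
    have h := eigen_sum_trace hX
    rw [htr] at h
    exact_mod_cast h.symm
  have hex : ∃ i₀, 0 < lam i₀ := by
    by_contra h
    push_neg at h
    have hall : ∀ i ∈ Finset.univ, -lam i = 0 := by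
      refine (Finset.sum_eq_zero_iff_of_nonneg (fun i _ => neg_nonneg.mpr (h i))).1 ?_
      simp [hsum]
    apply hne
    conv_lhs => rw [spectral hX, ← hUdef]
    have hz : (fun i => (lam i : ℂ)) = fun _ => 0 := by
      ext i
      have := hall i (Finset.mem_univ i)
      simp only [neg_eq_zero] at this
      simp [this]
    rw [← hlamdef, hz]
    simp
  obtain ⟨i₀, hi₀⟩ := hex
  have hs0 : (lam i₀ : ℝ) ≠ 0 := ne_of_gt hi₀
  set g : Fin d → ℝ := fun i => if i = i₀ then 0 else -lam i / lam i₀ with hgdef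
  set ρ := U * Matrix.diagonal (fun i => (g i : ℂ)) * star U with hρdef
  have hlamneg : ∀ i, i ≠ i₀ → lam i ≤ 0 := by
    intro i hi
    by_contra hpos
    push_neg at hpos
    exact hi (hone i i₀ hpos hi₀)
  have hgnn : ∀ i, 0 ≤ g i := by
    intro i
    by_cases hii : i = i₀
    · simp [hgdef, hii]
    · simp only [hgdef, hii, if_false]
      exact div_nonneg (neg_nonneg.mpr (hlamneg i hii)) hi₀.le
  have hρtr : ρ.trace = 1 := by
    rw [hρdef, trace_UDU U hU]
    have hg1 : ∑ i, g i = 1 := by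
      have h1 : ∀ i, g i = -lam i / lam i₀ + (if i = i₀ then 1 else 0) := by
        intro i
        by_cases hii : i = i₀
        · subst hii; simp [hgdef]; field_simp; norm_num
        · simp [hgdef, hii]
      rw [Finset.sum_congr rfl fun i _ => h1 i, Finset.sum_add_distrib,
        Finset.sum_ite_eq' Finset.univ i₀ (fun _ => (1:ℝ))]
      simp only [Finset.mem_univ, if_true]
      have hneg : ∑ i, -lam i / lam i₀ = 0 := by
        have h2 : ∀ i, -lam i / lam i₀ = -(lam i / lam i₀) := fun i => neg_div _ _
        rw [Finset.sum_congr rfl fun i _ => h2 i, Finset.sum_neg_distrib, ← Finset.sum_div,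
          hsum, zero_div, neg_zero]
      rw [hneg]
      simp
    rw [← Complex.ofReal_sum, hg1, Complex.ofReal_one]
  refine ⟨lam i₀, hi₀, fun k => U k i₀, col_unit U hU i₀, ρ, ⟨psd_UDU U g hgnn, hρtr⟩, ?_⟩
  have : ((lam i₀ : ℝ):ℂ) • (pureState (fun k => U k i₀) - ρ) = X := by
    rw [pure_col U i₀, hρdef, conj_sub, smul_diag_conj]
    conv_rhs => rw [spectral hX, ← hUdef, ← hlamdef]
    have hcast : ((lam i₀ : ℝ):ℂ) ≠ 0 := Complex.ofReal_ne_zero.mpr hs0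
    have harg : (fun i => ((lam i₀:ℝ):ℂ) * ((if i = i₀ then (1:ℂ) else 0) - ((g i : ℝ):ℂ))) =
        fun i => ((lam i : ℝ):ℂ) := by
      ext i
      by_cases hii : i = i₀
      · subst hii; simp [hgdef]
      · simp only [hii, if_false, hgdef]
        push_cast
        field_simp
        ring
    rw [harg]
  exact this.symm

end G

section H
variable {d : ℕ}

lemma memK {X : Matrix (Fin d) (Fin d) ℂ} (hX : X.IsHermitian) (hfr : frobNorm X = 1)
    (hone : ∀ i j, 0 < hX.eigenvalues i → 0 < hX.eigenvalues j → i = j) :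
    ∃ t : ℝ, 0 ≤ t ∧ t ≤ 1 ∧ ∃ φ : Fin d → ℂ, (∑ k, Complex.normSq (φ k)) = 1 ∧
      ((t:ℂ) • pureState φ - X).PosSemidef := by
  set U : Matrix (Fin d) (Fin d) ℂ := (hX.eigenvectorUnitary : Matrix (Fin d) (Fin d) ℂ) with hUdef
  have hU : star U * U = 1 := Matrix.mem_unitaryGroup_iff'.mp hX.eigenvectorUnitary.2
  set lam := hX.eigenvalues with hlamdef
  have key : ∀ (t : ℝ) (i₀ : Fin d), (∀ i, (if i = i₀ then t else 0) - lam i ≥ 0) →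
      (((t:ℝ):ℂ) • pureState (fun k => U k i₀) - X).PosSemidef := by
    intro t i₀ hnn
    have hid : ((t:ℝ):ℂ) • pureState (fun k => U k i₀) - X =
        U * Matrix.diagonal (fun i => (((if i = i₀ then t else 0) - lam i : ℝ) : ℂ)) * star U := by
      have harg : (fun i => ((t:ℝ):ℂ) * (if i = i₀ then (1:ℂ) else 0) - ((lam i:ℝ):ℂ)) =
          fun i => (((if i = i₀ then t else 0) - lam i : ℝ) : ℂ) := by
        ext i
        by_cases hii : i = i₀ <;> simp [hii]
      have e1 : ((t:ℝ):ℂ) • pureState (fun k => U k i₀) =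
          U * Matrix.diagonal (fun i => ((t:ℝ):ℂ) * (if i = i₀ then (1:ℂ) else 0)) * star U := by
        rw [pure_col U i₀, smul_diag_conj]
      have e2 : X = U * Matrix.diagonal (fun i => ((lam i:ℝ):ℂ)) * star U := by
        conv_lhs => rw [spectral hX]
      rw [e1]
      conv_lhs => rw [e2]
      rw [conj_sub U (fun i => ((t:ℝ):ℂ) * (if i = i₀ then (1:ℂ) else 0))
        (fun i => ((lam i:ℝ):ℂ)), harg]
    rw [hid]
    exact psd_UDU U _ hnn
  by_cases hex : ∃ i₀, 0 < lam i₀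
  · obtain ⟨i₀, hi₀⟩ := hex
    have hle1 : lam i₀ ≤ 1 := by
      have h1 : lam i₀ ^ 2 ≤ ∑ i, lam i ^ 2 :=
        Finset.single_le_sum (f := fun i => lam i ^ 2) (fun _ _ => sq_nonneg _) (Finset.mem_univ i₀)
      rw [← frob_sq_eigen hX, hfr, one_pow] at h1
      nlinarith
    refine ⟨lam i₀, hi₀.le, hle1, fun k => U k i₀, col_unit U hU i₀, key (lam i₀) i₀ ?_⟩
    intro i
    by_cases hii : i = i₀
    · simp [hii]
    · simp only [hii, if_false]
      have : lam i ≤ 0 := by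
        by_contra hpos
        push_neg at hpos
        exact hii (hone i i₀ hpos hi₀)
      linarith
  · push_neg at hex
    have hd : 0 < d := by
      rcases Nat.eq_zero_or_pos d with h | h
      · subst h
        rw [frobNorm] at hfr
        simp at hfr
      · exact h
    refine ⟨0, le_refl 0, zero_le_one, fun k => U k ⟨0, hd⟩,
      col_unit U hU ⟨0, hd⟩, key 0 ⟨0, hd⟩ ?_⟩
    intro i
    by_cases hii : i = (⟨0, hd⟩ : Fin d) <;> simp [hii] <;> linarith [hex i, hex (⟨0, hd⟩ : Fin d)]

end H

section T
variable {d l m : ℕ}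

lemma cont_entry {n m' : Type*} {α : Type*} [TopologicalSpace α] (i : n) (j : m') :
    Continuous fun X : Matrix n m' α => X i j :=
  (continuous_apply j).comp (continuous_apply i)

lemma continuous_frobNorm {n m' : Type*} [Fintype n] [Fintype m'] {𝕜 : Type*} [RCLike 𝕜] :
    Continuous fun X : Matrix n m' 𝕜 => frobNorm X := by
  apply Real.continuous_sqrt.comp
  apply continuous_finset_sum
  intro i _
  apply continuous_finset_sum
  intro j _
  exact (cont_entry i j).norm.pow 2

lemma continuous_measMap (Q : Fin l → Fin m → Matrix (Fin d) (Fin d) ℂ) :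
    Continuous fun X => measMap Q X := by
  apply continuous_pi
  intro i
  apply continuous_pi
  intro j
  show Continuous fun X : Matrix (Fin d) (Fin d) ℂ => (Matrix.trace (X * Q i j)).re
  apply Complex.continuous_re.comp
  have : (fun X : Matrix (Fin d) (Fin d) ℂ => Matrix.trace (X * Q i j)) =
      fun X => ∑ k, ∑ e, X k e * Q i j e k := by
    ext X
    rw [Matrix.trace]
    congr 1
  rw [this]
  apply continuous_finset_sum
  intro k _
  apply continuous_finset_sum
  intro e _
  exact (cont_entry k e).mul continuous_const

lemma isClosed_nonnegC : IsClosed {z : ℂ | 0 ≤ z} := by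
  have h : {z : ℂ | 0 ≤ z} = Complex.re ⁻¹' Set.Ici 0 ∩ Complex.im ⁻¹' {0} := by
    ext z
    simp only [Set.mem_setOf_eq, Set.mem_inter_iff, Set.mem_preimage, Set.mem_Ici,
      Set.mem_singleton_iff, Complex.le_def, Complex.zero_re, Complex.zero_im]
    tauto
  rw [h]
  exact (isClosed_Ici.preimage Complex.continuous_re).inter
    (isClosed_singleton.preimage Complex.continuous_im)

lemma cont_quad {E : Type*} [TopologicalSpace E] (A : E → Matrix (Fin d) (Fin d) ℂ)
    (hA : Continuous A) (x : Fin d → ℂ) :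
    Continuous fun e => dotProduct (star x) (A e *ᵥ x) := by
  show Continuous fun e => ∑ k, star (x k) * ∑ j, A e k j * x j
  apply continuous_finset_sum
  intro k _
  apply Continuous.mul continuous_const
  apply continuous_finset_sum
  intro j _
  exact ((cont_entry k j).comp hA).mul continuous_const

lemma isClosed_psd : IsClosed {M : Matrix (Fin d) (Fin d) ℂ | M.PosSemidef} := by
  have hset : {M : Matrix (Fin d) (Fin d) ℂ | M.PosSemidef} =
      {M : Matrix (Fin d) (Fin d) ℂ | Mᴴ = M} ∩
        ⋂ x : Fin d → ℂ, {M : Matrix (Fin d) (Fin d) ℂ | 0 ≤ dotProduct (star x) (M *ᵥ x)} := by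
    ext M
    simp only [Set.mem_setOf_eq, Set.mem_inter_iff, Set.mem_iInter]
    exact Matrix.posSemidef_iff_dotProduct_mulVec
  rw [hset]
  refine IsClosed.inter (isClosed_eq ?_ continuous_id) (isClosed_iInter fun x => ?_)
  · apply continuous_pi
    intro i
    apply continuous_pi
    intro j
    exact continuous_star.comp (cont_entry j i)
  · exact isClosed_nonnegC.preimage (cont_quad id continuous_id x)

def KK (d : ℕ) : Set (Matrix (Fin d) (Fin d) ℂ) :=
  {X | X.IsHermitian ∧ X.trace = 0 ∧ frobNorm X = 1 ∧
    ∃ φ : Fin d → ℂ, (∑ k, Complex.normSq (φ k)) = 1 ∧ ∃ t : ℝ, 0 ≤ t ∧ t ≤ 1 ∧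
      ((t:ℂ) • pureState φ - X).PosSemidef}

lemma isCompact_KK : IsCompact (KK d) := by
  set W : Set (Matrix (Fin d) (Fin d) ℂ × ((Fin d → ℂ) × ℝ)) :=
    {q | q.1.IsHermitian ∧ q.1.trace = 0 ∧ frobNorm q.1 = 1 ∧
      (∑ k, Complex.normSq (q.2.1 k)) = 1 ∧ 0 ≤ q.2.2 ∧ q.2.2 ≤ 1 ∧
      (((q.2.2 : ℝ):ℂ) • pureState q.2.1 - q.1).PosSemidef} with hWdef
  have himg : KK d = Prod.fst '' W := by
    ext X
    constructor
    · rintro ⟨h1, h2, h3, φ, h4, t, h5, h6, h7⟩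
      exact ⟨(X, (φ, t)), ⟨h1, h2, h3, h4, h5, h6, h7⟩, rfl⟩
    · rintro ⟨q, ⟨h1, h2, h3, h4, h5, h6, h7⟩, rfl⟩
      exact ⟨h1, h2, h3, q.2.1, h4, q.2.2, h5, h6, h7⟩
  rw [himg]
  apply IsCompact.image _ continuous_fst
  have hbig : IsCompact ({X : Matrix (Fin d) (Fin d) ℂ | ∀ i j, ‖X i j‖ ≤ 1} ×ˢ
      ({v : Fin d → ℂ | ∀ k, ‖v k‖ ≤ 1} ×ˢ Set.Icc (0:ℝ) 1)) := by
    refine IsCompact.prod ?_ (IsCompact.prod ?_ isCompact_Icc)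
    · have h : {X : Matrix (Fin d) (Fin d) ℂ | ∀ i j, ‖X i j‖ ≤ 1} =
          Set.pi Set.univ (fun _ : Fin d => Set.pi Set.univ
            fun _ : Fin d => Metric.closedBall (0:ℂ) 1) := by
        ext X
        constructor
        · intro hX
          exact Set.mem_univ_pi.2 fun i => Set.mem_univ_pi.2 fun j => by
            simpa [dist_zero_right] using hX i j
        · intro hX i j
          have := Set.mem_univ_pi.1 (Set.mem_univ_pi.1 hX i) j
          simpa [dist_zero_right] using this
      rw [h]
      exact isCompact_univ_pi fun _ => isCompact_univ_pi fun _ => isCompact_closedBall 0 1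
    · have h : {v : Fin d → ℂ | ∀ k, ‖v k‖ ≤ 1} =
          Set.pi Set.univ (fun _ : Fin d => Metric.closedBall (0:ℂ) 1) := by
        ext v
        constructor
        · intro hv
          exact Set.mem_univ_pi.2 fun k => by simpa [dist_zero_right] using hv k
        · intro hv k
          have := Set.mem_univ_pi.1 hv k
          simpa [dist_zero_right] using this
      rw [h]
      exact isCompact_univ_pi fun _ => isCompact_closedBall 0 1
  apply IsCompact.of_isClosed_subset hbig
  · -- closedness of W
    have hW2 : W = ({q : Matrix (Fin d) (Fin d) ℂ × ((Fin d → ℂ) × ℝ) | q.1ᴴ = q.1} ∩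
        ({q | q.1.trace = 0} ∩ ({q | frobNorm q.1 = 1} ∩
        ({q | (∑ k, Complex.normSq (q.2.1 k)) = 1} ∩ ({q | 0 ≤ q.2.2} ∩ ({q | q.2.2 ≤ 1} ∩
        {q | (((q.2.2 : ℝ):ℂ) • pureState q.2.1 - q.1).PosSemidef})))))) := rfl
    rw [hW2]
    have hcont1 : Continuous fun q : Matrix (Fin d) (Fin d) ℂ × ((Fin d → ℂ) × ℝ) => q.1 :=
      continuous_fst
    refine IsClosed.inter ?_ (IsClosed.inter ?_ (IsClosed.inter ?_ (IsClosed.inter ?_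
      (IsClosed.inter ?_ (IsClosed.inter ?_ ?_)))))
    · refine isClosed_eq ?_ hcont1
      apply continuous_pi
      intro i
      apply continuous_pi
      intro j
      exact continuous_star.comp ((cont_entry j i).comp hcont1)
    · refine isClosed_eq ?_ continuous_const
      show Continuous fun q : Matrix (Fin d) (Fin d) ℂ × ((Fin d → ℂ) × ℝ) => ∑ i, q.1 i i
      apply continuous_finset_sum
      intro i _
      exact (cont_entry i i).comp hcont1
    · exact isClosed_eq (continuous_frobNorm.comp hcont1) continuous_const
    · refine isClosed_eq ?_ continuous_const
      apply continuous_finset_sum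
      intro k _
      exact Complex.continuous_normSq.comp
        ((continuous_apply k).comp (continuous_fst.comp continuous_snd))
    · exact isClosed_le continuous_const (continuous_snd.comp continuous_snd)
    · exact isClosed_le (continuous_snd.comp continuous_snd) continuous_const
    · apply IsClosed.preimage ?_ isClosed_psd
      apply continuous_pi
      intro i
      apply continuous_pi
      intro j
      show Continuous fun q : Matrix (Fin d) (Fin d) ℂ × ((Fin d → ℂ) × ℝ) =>
        ((q.2.2 : ℝ):ℂ) * (q.2.1 i * star (q.2.1 j)) - q.1 i j
      apply Continuous.sub ?_ ((cont_entry i j).comp hcont1)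
      apply Continuous.mul
      · exact Complex.continuous_ofReal.comp (continuous_snd.comp continuous_snd)
      · exact Continuous.mul ((continuous_apply i).comp (continuous_fst.comp continuous_snd))
          (continuous_star.comp ((continuous_apply j).comp (continuous_fst.comp continuous_snd)))
  · -- subset
    rintro ⟨X, φ, t⟩ ⟨h1, h2, h3, h4, h5, h6, h7⟩
    refine ⟨?_, ?_, h5, h6⟩
    · intro i j
      calc ‖X i j‖ ≤ frobNorm X := entry_le_frobNorm X i j
        _ = 1 := h3
    · intro k
      have hk : Complex.normSq (φ k) ≤ 1 := by
        have := Finset.single_le_sum (f := fun k => Complex.normSq (φ k))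
          (fun _ _ => Complex.normSq_nonneg _) (Finset.mem_univ k)
        rw [h4] at this
        exact this
      have h9 : ‖φ k‖ ^ 2 = Complex.normSq (φ k) := by
        rw [Complex.sq_norm]
      nlinarith [norm_nonneg (φ k)]

end T

section M
variable {d l m : ℕ}

lemma psd_smul_real {ρ : Matrix (Fin d) (Fin d) ℂ} (h : ρ.PosSemidef) (c : ℝ) (hc : 0 ≤ c) :
    ((c:ℂ) • ρ).PosSemidef := by
  refine Matrix.PosSemidef.of_dotProduct_mulVec_nonneg ?_ ?_
  · rw [Matrix.IsHermitian, Matrix.conjTranspose_smul, h.1.eq]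
    congr 1
    simp [Complex.star_def, Complex.conj_ofReal]
  · intro x
    rw [Matrix.smul_mulVec, dotProduct_smul, smul_eq_mul]
    exact mul_nonneg (Complex.zero_le_real.mpr hc) (h.dotProduct_mulVec_nonneg x)

lemma hatX_mem {ψ : Fin d → ℂ} (hψ : (∑ k, Complex.normSq (ψ k)) = 1)
    {ρ : Matrix (Fin d) (Fin d) ℂ} (hρ : IsState ρ) (hne : pureState ψ - ρ ≠ 0) :
    ((((frobNorm (pureState ψ - ρ))⁻¹ : ℝ) : ℂ) • (pureState ψ - ρ)) ∈ KK d := by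
  set X := pureState ψ - ρ with hXdef
  have hXH : X.IsHermitian := (pureState_isHermitian ψ).sub hρ.1.1
  have hfrpos : 0 < frobNorm X := by
    rcases lt_or_eq_of_le (frobNorm_nonneg X) with h | h
    · exact h
    · exact absurd (frobNorm_eq_zero_iff.1 h.symm) hne
  set c : ℝ := (frobNorm X)⁻¹ with hcdef
  have hcpos : 0 < c := inv_pos.2 hfrpos
  have hherm : ((c:ℂ) • X).IsHermitian := by
    rw [Matrix.IsHermitian, Matrix.conjTranspose_smul, hXH.eq]
    congr 1
    simp [Complex.star_def, Complex.conj_ofReal]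
  have hfr1 : frobNorm ((c:ℂ) • X) = 1 := by
    rw [frobNorm_smul]
    rw [Complex.norm_real]
    rw [Real.norm_eq_abs, abs_of_pos hcpos, hcdef]
    exact inv_mul_cancel₀ (ne_of_gt hfrpos)
  have htr : ((c:ℂ) • X).trace = 0 := by
    rw [Matrix.trace_smul]
    have hXtr : X.trace = 0 := by
      rw [hXdef, Matrix.trace_sub, pureState_trace, hψ, hρ.2]
      simp
    rw [hXtr, smul_zero]
  refine ⟨hherm, htr, hfr1, ?_⟩
  have hpsdcρ : ((c:ℂ) • pureState ψ - (c:ℂ) • X).PosSemidef := by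
    have he : (c:ℂ) • pureState ψ - (c:ℂ) • X = (c:ℂ) • ρ := by
      rw [← smul_sub, hXdef, sub_sub_cancel]
    rw [he]
    exact psd_smul_real hρ.1 c hcpos.le
  have hone := onePos hherm c ψ hpsdcρ
  obtain ⟨t, ht0, ht1, φ, hφ, hpsd⟩ := memK hherm hfr1 hone
  exact ⟨φ, hφ, t, ht0, ht1, hpsd⟩

lemma bdd_opSet (Q Q' : Fin l → Fin m → Matrix (Fin d) (Fin d) ℂ) :
    BddAbove {r : ℝ | ∃ X : Matrix (Fin d) (Fin d) ℂ, X.IsHermitian ∧ frobNorm X = 1 ∧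
      r = frobNorm (measMap Q X - measMap Q' X)} := by
  refine ⟨Real.sqrt (∑ i, ∑ j, (∑ k, ∑ e, ‖Q i j e k - Q' i j e k‖)^2), ?_⟩
  rintro r ⟨X, hH, hfr, rfl⟩
  rw [frobNorm]
  apply Real.sqrt_le_sqrt
  apply Finset.sum_le_sum
  intro i _
  apply Finset.sum_le_sum
  intro j _
  have hXe : ∀ a b, ‖X a b‖ ≤ 1 := by
    intro a b
    calc ‖X a b‖ ≤ frobNorm X := entry_le_frobNorm X a b
      _ = 1 := hfr
  have t1 : ∀ (P : Fin m → Matrix (Fin d) (Fin d) ℂ),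
      Matrix.trace (X * P j) = ∑ k, ∑ e, X k e * P j e k := by
    intro P
    rw [Matrix.trace]
    congr 1
  have hentry : ‖(measMap Q X - measMap Q' X) i j‖ ≤ ∑ k, ∑ e, ‖Q i j e k - Q' i j e k‖ := by
    have he : (measMap Q X - measMap Q' X) i j =
        (∑ k, ∑ e, X k e * (Q i j e k - Q' i j e k)).re := by
      have hsplit : (∑ k, ∑ e, X k e * (Q i j e k - Q' i j e k)) =
          (∑ k, ∑ e, X k e * Q i j e k) - (∑ k, ∑ e, X k e * Q' i j e k) := by
        rw [← Finset.sum_sub_distrib]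
        congr 1
        ext k
        rw [← Finset.sum_sub_distrib]
        congr 1
        ext e
        ring
      rw [hsplit, Complex.sub_re]
      show measMap Q X i j - measMap Q' X i j = _
      rw [measMap, measMap, Matrix.of_apply, Matrix.of_apply, t1 (Q i), t1 (Q' i)]
    rw [he]
    calc |(∑ k, ∑ e, X k e * (Q i j e k - Q' i j e k)).re|
        ≤ ‖(∑ k, ∑ e, X k e * (Q i j e k - Q' i j e k))‖ := Complex.abs_re_le_norm _
      _ ≤ ∑ k, ∑ e, ‖X k e * (Q i j e k - Q' i j e k)‖ := by
          calc ‖(∑ k, ∑ e, X k e * (Q i j e k - Q' i j e k))‖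
              ≤ ∑ k, ‖∑ e, X k e * (Q i j e k - Q' i j e k)‖ := norm_sum_le _ _
            _ ≤ ∑ k, ∑ e, ‖X k e * (Q i j e k - Q' i j e k)‖ :=
                Finset.sum_le_sum fun k _ => norm_sum_le _ _
      _ ≤ ∑ k, ∑ e, ‖Q i j e k - Q' i j e k‖ := by
          apply Finset.sum_le_sum
          intro k _
          apply Finset.sum_le_sum
          intro e _
          rw [norm_mul]
          calc ‖X k e‖ * ‖Q i j e k - Q' i j e k‖ ≤ 1 * ‖Q i j e k - Q' i j e k‖ :=
                mul_le_mul_of_nonneg_right (hXe k e) (norm_nonneg _)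
            _ = ‖Q i j e k - Q' i j e k‖ := one_mul _
  calc ‖(measMap Q X - measMap Q' X) i j‖ ^ 2
      ≤ (∑ k, ∑ e, ‖Q i j e k - Q' i j e k‖) ^ 2 :=
        pow_le_pow_left₀ (norm_nonneg _) hentry 2
    _ = _ := rfl

end M


theorem stmt6 {d l m : ℕ}
    (Q : Fin l → Fin m → Matrix (Fin d) (Fin d) ℂ) (hQ : IsMeasScheme Q)
    (hdet : DeterminesPure Q) :
    ∃ ε > (0 : ℝ), ∀ Q' : Fin l → Fin m → Matrix (Fin d) (Fin d) ℂ, IsMeasScheme Q' →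
      opNormHerm (fun X => measMap Q X - measMap Q' X) < ε → DeterminesPure Q' := by
  by_cases hK : (KK d).Nonempty
  · obtain ⟨x₀, hx₀, hmin⟩ := isCompact_KK.exists_isMinOn hK
      ((continuous_frobNorm.comp (continuous_measMap Q)).continuousOn)
    set ε := frobNorm (measMap Q x₀) with hεdef
    have hεpos : 0 < ε := by
      obtain ⟨hH, htr, hfr, φ, hφ, t, ht0, ht1, hpsd⟩ := hx₀
      have hone := onePos hH t φ hpsd
      have hne : x₀ ≠ 0 := by
        intro h
        rw [h, frobNorm_eq_zero_iff.2 rfl] at hfr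
        exact zero_ne_one hfr
      obtain ⟨s, hs, ψ, hψ, ρ, hρ, hXeq⟩ := decomp hH htr hne hone
      rcases lt_or_eq_of_le (frobNorm_nonneg (measMap Q x₀)) with h | h
      · exact h
      · exfalso
        have h0 : measMap Q x₀ = 0 := frobNorm_eq_zero_iff.1 h.symm
        have h1 : measMap Q (pureState ψ) = measMap Q ρ := by
          have h2 : measMap Q x₀ = s • (measMap Q (pureState ψ) - measMap Q ρ) := by
            rw [hXeq, measMap_smul, measMap_sub]
          rw [h0] at h2
          have h3 : measMap Q (pureState ψ) - measMap Q ρ = 0 := by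
            rcases smul_eq_zero.1 h2.symm with h4 | h4
            · exact absurd h4 (ne_of_gt hs)
            · exact h4
          exact sub_eq_zero.1 h3
        have h5 := hdet ψ hψ ρ hρ h1
        apply hne
        rw [hXeq, h5, sub_self, smul_zero]
    refine ⟨ε, hεpos, ?_⟩
    intro Q' hQ' hnorm ψ hψ ρ hρ hmeq
    by_contra hne'
    have hXne : pureState ψ - ρ ≠ 0 := by
      intro h
      exact hne' ((sub_eq_zero.1 h).symm)
    set X := pureState ψ - ρ with hXdef
    set c : ℝ := (frobNorm X)⁻¹ with hcdef
    have hmem := hatX_mem hψ hρ hXne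
    have hQ'X : measMap Q' X = 0 := by
      rw [hXdef, measMap_sub, hmeq, sub_self]
    have hQ'cX : measMap Q' ((c:ℂ) • X) = 0 := by
      rw [measMap_smul, hQ'X, smul_zero]
    have h1 : ε ≤ frobNorm (measMap Q ((c:ℂ) • X)) := hmin hmem
    have h2 : frobNorm (measMap Q ((c:ℂ) • X)) ≤
        opNormHerm (fun Y => measMap Q Y - measMap Q' Y) := by
      have hval : measMap Q ((c:ℂ) • X) = measMap Q ((c:ℂ) • X) - measMap Q' ((c:ℂ) • X) := by
        rw [hQ'cX, sub_zero]
      rw [hval]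
      exact le_csSup (bdd_opSet Q Q') ⟨(c:ℂ) • X, hmem.1, hmem.2.2.1, rfl⟩
    linarith
  · refine ⟨1, one_pos, ?_⟩
    intro Q' hQ' hnorm ψ hψ ρ hρ hmeq
    by_contra hne'
    have hXne : pureState ψ - ρ ≠ 0 := by
      intro h
      exact hne' ((sub_eq_zero.1 h).symm)
    exact hK ⟨_, hatX_mem hψ hρ hXne⟩
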